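/- arXiv:2205.02174 — 5 statements merged into one kernel-verified Lean document; each statement's English description precedes it below -/
import Mathlib

section
/- Suppose C is semiprime or satisfies condition (⋆). Then for all compact elements a,b ∈ C, if [a,b] ≤ ρ(⊥), then there exists an integer m ≥ 0 such that [[a,a]^m,[b,b]^m] = ⊥. -/
open CompleteLattice

/-- A complete lattice equipped with a commutator operation, axiomatizing the congruence
lattice of an algebra in a semidegenerate congruence-modular variety whose compact
congruences are closed under the commutator. -/
class CommutatorLattice (C : Type*) [CompleteLattice C] where
  comm : C → C → C
  comm_comm : ∀ a b : C, comm a b = comm b a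
  comm_sSup : ∀ (s : Set C) (b : C), comm (sSup s) b = ⨆ a ∈ s, comm a b
  comm_le_inf : ∀ a b : C, comm a b ≤ a ⊓ b
  comm_top : ∀ a : C, comm a ⊤ = a
  compactlyGenerated : ∀ x : C,
    ∃ s : Set C, (∀ a ∈ s, IsCompactElement a) ∧ sSup s = x
  top_isCompact : IsCompactElement (⊤ : C)
  comm_isCompact : ∀ a b : C, IsCompactElement a → IsCompactElement b →
    IsCompactElement (comm a b)

namespace CommutatorLattice

variable {C : Type*} [CompleteLattice C] [CommutatorLattice C]

/-- The residuation `a → b := ⨆ {c | [a,c] ≤ b}`. -/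
def resid (a b : C) : C := sSup {c : C | comm a c ≤ b}

/-- The annihilator `a⊥ := a → ⊥`. -/
def ann (a : C) : C := resid a ⊥

/-- Iterated commutator: `cpow a n = [a,a]^n`, with the convention `[a,a]^0 = a`.
Note that `[a,b]^n` for `n ≥ 1` equals `cpow (comm a b) (n-1)`. -/
def cpow (a : C) : ℕ → C
  | 0 => a
  | n + 1 => comm (cpow a n) (cpow a n)

/-- Prime elements: `p ≠ ⊤` and `[a,b] ≤ p` implies `a ≤ p` or `b ≤ p`. -/
def IsPrime (p : C) : Prop := p ≠ ⊤ ∧ ∀ a b : C, comm a b ≤ p → a ≤ p ∨ b ≤ p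

/-- The radical `ρ(a) := ⨅ {p prime | a ≤ p}`. -/
def radical (a : C) : C := sInf {p : C | IsPrime p ∧ a ≤ p}

variable (C) in
/-- `C` is semiprime if `ρ(⊥) = ⊥`. -/
def Semiprime : Prop := radical (⊥ : C) = ⊥

variable (C) in
/-- Condition (⋆): for all compact `a`, `b` and all `n ≥ 1` there is `m ≥ 0` with
`[[a,a]^m, [b,b]^m] ≤ [a,b]^n`.  Here `cpow (comm a b) n = [a,b]^(n+1)`, so `n : ℕ`
ranges exactly over the exponents `≥ 1` of the paper. -/
def Star : Prop := ∀ a b : C, IsCompactElement a → IsCompactElement b →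
  ∀ n : ℕ, ∃ m : ℕ, comm (cpow a m) (cpow b m) ≤ cpow (comm a b) n

/-- Pure elements: `t ⊔ a⊥ = ⊤` for every compact `a ≤ t`. -/
def IsPure (t : C) : Prop := ∀ a : C, IsCompactElement a → a ≤ t → t ⊔ ann a = ⊤

/-- w-pure elements: `t ⊔ (a → ρ(⊥)) = ⊤` for every compact `a ≤ t`. -/
def IsWPure (t : C) : Prop :=
  ∀ a : C, IsCompactElement a → a ≤ t → t ⊔ resid a (radical ⊥) = ⊤

/-- Complemented elements. -/
def IsComplEl (a : C) : Prop := ∃ b : C, a ⊔ b = ⊤ ∧ a ⊓ b = ⊥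

/-- Regular elements: joins of sets of complemented elements. -/
def IsRegular (t : C) : Prop := ∃ S : Set C, (∀ a ∈ S, IsComplEl a) ∧ t = sSup S

/-- Max-regular elements: maximal among regular elements distinct from `⊤`. -/
def IsMaxRegular (t : C) : Prop :=
  IsRegular t ∧ t ≠ ⊤ ∧ ∀ u : C, IsRegular u → u ≠ ⊤ → t ≤ u → u = t

/-- Maximal elements of `C \ {⊤}`. -/
def IsMaximal (p : C) : Prop := p ≠ ⊤ ∧ ∀ q : C, q ≠ ⊤ → p ≤ q → q = p

/-- Minimal primes. -/
def IsMinPrime (p : C) : Prop := IsPrime p ∧ ∀ q : C, IsPrime q → q ≤ p → q = p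

variable (C) in
/-- `C` is mp if every prime lies above a unique minimal prime. -/
def MP : Prop := ∀ p : C, IsPrime p → ∃! q : C, IsMinPrime q ∧ q ≤ p

variable (C) in
/-- `C` is PF if `a⊥` is pure for every compact `a`. -/
def PF : Prop := ∀ a : C, IsCompactElement a → IsPure (ann a)

variable (C) in
/-- `C` is PP if `a⊥` is complemented for every compact `a`. -/
def PP : Prop := ∀ a : C, IsCompactElement a → IsComplEl (ann a)

/-- `O(p) := ⨆ {a compact | a⊥ ≰ p}`. -/
def O (p : C) : C := sSup {a : C | IsCompactElement a ∧ ¬ ann a ≤ p}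

variable (C) in
/-- `C` is normal. -/
def Normal : Prop := ∀ t u : C, t ⊔ u = ⊤ →
  ∃ a b : C, t ⊔ a = ⊤ ∧ u ⊔ b = ⊤ ∧ comm a b = ⊥

variable (C) in
/-- `C` is B-normal. -/
def BNormal : Prop := ∀ t u : C, t ⊔ u = ⊤ →
  ∃ a b : C, IsComplEl a ∧ IsComplEl b ∧ t ⊔ a = ⊤ ∧ u ⊔ b = ⊤ ∧ comm a b = ⊥

variable (C) in
/-- `C` is purified. -/
def Purified : Prop := ∀ p q : C, IsMinPrime p → IsMinPrime q → p ≠ q →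
  ∃ a : C, IsComplEl a ∧ a ≤ p ∧ ann a ≤ q

variable (C) in
/-- The prime spectrum of `C`. -/
abbrev Spec := {p : C // IsPrime p}

variable (C) in
/-- The Zariski topology on `Spec C`: the closed sets are the `V(t) = {p | t ≤ p}`,
equivalently the topology generated by the sets `D(t) = {p | t ≰ p}`. -/
def zariskiTop : TopologicalSpace (Spec C) :=
  TopologicalSpace.generateFrom {U : Set (Spec C) | ∃ t : C, U = {p : Spec C | ¬ t ≤ p.1}}

variable (C) in
/-- The flat topology on `Spec C`: generated by the open basis `V(a)`, `a` compact. -/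
def flatTop : TopologicalSpace (Spec C) :=
  TopologicalSpace.generateFrom
    {U : Set (Spec C) | ∃ a : C, IsCompactElement a ∧ U = {p : Spec C | a ≤ p.1}}

/-- Binary sup version of `comm_sSup`. -/
lemma comm_sup (x y z : C) : comm (x ⊔ y) z = comm x z ⊔ comm y z := by
  have := comm_sSup ({x, y} : Set C) z
  rw [sSup_pair, iSup_pair] at this
  exact this

lemma comm_mono_left {x y : C} (z : C) (h : x ≤ y) : comm x z ≤ comm y z := by
  have : comm (x ⊔ y) z = comm x z ⊔ comm y z := comm_sup x y z
  rw [sup_eq_right.mpr h] at this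
  rw [this]; exact le_sup_left

lemma comm_mono {x y x' y' : C} (hx : x ≤ x') (hy : y ≤ y') :
    comm x y ≤ comm x' y' := by
  calc comm x y ≤ comm x' y := comm_mono_left y hx
    _ = comm y x' := comm_comm _ _
    _ ≤ comm y' x' := comm_mono_left x' hy
    _ = comm x' y' := comm_comm _ _

lemma cpow_isCompact {c : C} (hc : IsCompactElement c) (n : ℕ) :
    IsCompactElement (cpow c n) := by
  induction n with
  | zero => exact hc
  | succ k ih => exact comm_isCompact _ _ ih ih

lemma cpow_succ_le (c : C) (n : ℕ) : cpow c (n + 1) ≤ cpow c n :=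
  le_trans (comm_le_inf _ _) inf_le_left

lemma cpow_le_cpow (c : C) {m n : ℕ} (h : m ≤ n) : cpow c n ≤ cpow c m := by
  induction n with
  | zero => simp [Nat.le_zero.mp h]
  | succ k ih =>
    rcases Nat.lt_or_ge m (k+1) with hlt | hge
    · exact le_trans (cpow_succ_le c k) (ih (Nat.lt_succ_iff.mp hlt))
    · have : m = k + 1 := le_antisymm h hge
      simp [this]

lemma cpow_mono {x y : C} (h : x ≤ y) (n : ℕ) : cpow x n ≤ cpow y n := by
  induction n with
  | zero => exact h
  | succ k ih => exact comm_mono ih ih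

/-- A compact element below the radical of `⊥` is nilpotent. -/
lemma nilpotent_of_le_radical_bot {c : C} (hc : IsCompactElement c)
    (h : c ≤ radical (⊥ : C)) : ∃ n : ℕ, cpow c n = ⊥ := by
  by_contra hcon
  push_neg at hcon
  -- the set of elements not above any cpow c n
  set S : Set C := {x : C | ∀ n : ℕ, ¬ cpow c n ≤ x} with hS
  have hbot : (⊥ : C) ∈ S := by
    intro n hn
    exact hcon n (le_bot_iff.mp hn)
  obtain ⟨p, hpS, hpmax⟩ : ∃ p, Maximal (· ∈ S) p := by
    refine zorn_le₀ S ?_ |>.imp fun p hp => hp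
    intro ch hchS hch
    rcases ch.eq_empty_or_nonempty with rfl | hne
    · exact ⟨⊥, hbot, by simp⟩
    · refine ⟨sSup ch, ?_, fun z hz => le_sSup hz⟩
      intro n hn
      have hdir := hch.directedOn
      obtain ⟨x, hx, hle⟩ :=
        (isCompactElement_iff_le_of_directed_sSup_le C (cpow c n)).mp
          (cpow_isCompact hc n) ch hne hdir hn
      exact hchS hx n hle
  have hpprime : IsPrime p := by
    constructor
    · rintro rfl
      exact hpS 0 le_top
    · intro x y hxy
      by_contra hcontra
      push_neg at hcontra
      obtain ⟨hx, hy⟩ := hcontra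
      have hxn : ∃ n, cpow c n ≤ p ⊔ x := by
        by_contra hno; push_neg at hno
        have : p ⊔ x ≤ p := hpmax hno le_sup_left
        exact hx (le_trans le_sup_right this)
      have hyn : ∃ n, cpow c n ≤ p ⊔ y := by
        by_contra hno; push_neg at hno
        have : p ⊔ y ≤ p := hpmax hno le_sup_left
        exact hy (le_trans le_sup_right this)
      obtain ⟨n, hn⟩ := hxn
      obtain ⟨m, hm⟩ := hyn
      set k := max n m with hk
      have h1 : cpow c k ≤ p ⊔ x := le_trans (cpow_le_cpow c (le_max_left n m)) hn
      have h2 : cpow c k ≤ p ⊔ y := le_trans (cpow_le_cpow c (le_max_right n m)) hm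
      have h3 : cpow c (k + 1) ≤ comm (p ⊔ x) (p ⊔ y) := comm_mono h1 h2
      have h4 : comm (p ⊔ x) (p ⊔ y) ≤ p := by
        rw [comm_sup]
        refine sup_le (le_trans (comm_le_inf _ _) inf_le_left) ?_
        rw [comm_comm, comm_sup]
        refine sup_le (le_trans (comm_le_inf _ _) inf_le_left) ?_
        rw [comm_comm]; exact hxy
      exact hpS (k + 1) (le_trans h3 h4)
  have hradle : radical (⊥ : C) ≤ p := sInf_le ⟨hpprime, bot_le⟩
  exact hpS 0 (le_trans h hradle)

theorem statement0 (h : Semiprime C ∨ Star C) (a b : C)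
    (ha : IsCompactElement a) (hb : IsCompactElement b)
    (hab : comm a b ≤ radical (⊥ : C)) :
    ∃ m : ℕ, comm (cpow a m) (cpow b m) = ⊥ := by
  rcases h with hsp | hstar
  · exact ⟨0, le_bot_iff.mp (hsp ▸ hab)⟩
  · obtain ⟨n, hn⟩ := nilpotent_of_le_radical_bot
      (comm_isCompact a b ha hb) hab
    obtain ⟨m, hm⟩ := hstar a b ha hb n
    exact ⟨m, le_bot_iff.mp (hn ▸ hm)⟩

end CommutatorLattice
end

section
/- If t ∈ C and u ∈ C is pure, then [t,u] = t ⊓ u. -/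
open CompleteLattice

namespace CommutatorLattice

variable {C : Type*} [CompleteLattice C] [CommutatorLattice C]

lemma comm_mono_left_s1 {a b : C} (c : C) (h : a ≤ b) : comm a c ≤ comm b c := by
  have : sSup {a, b} = b := by simp [sup_eq_right.2 h]
  have h2 := comm_sSup {a, b} c
  rw [this] at h2
  rw [h2]
  exact le_iSup_of_le a (by simp)

lemma comm_sup_right (a b c : C) : comm a (b ⊔ c) = comm a b ⊔ comm a c := by
  rw [comm_comm, ← sSup_pair, comm_sSup]
  rw [iSup_insert, iSup_singleton, comm_comm b, comm_comm c]

lemma comm_ann_le_bot (a : C) : comm a (ann a) ≤ ⊥ := by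
  rw [ann, resid, comm_comm, comm_sSup]
  exact iSup₂_le fun c hc => by rw [comm_comm]; exact hc

theorem statement1 (t u : C) (hu : IsPure u) : comm t u = t ⊓ u := by
  refine le_antisymm (comm_le_inf t u) ?_
  obtain ⟨s, hs, hsup⟩ := compactlyGenerated (t ⊓ u)
  rw [← hsup]
  refine sSup_le fun a ha => ?_
  have hle : a ≤ t ⊓ u := hsup ▸ le_sSup ha
  have hpure := hu a (hs a ha) (hle.trans inf_le_right)
  calc a = comm a ⊤ := (comm_top a).symm
    _ = comm a u ⊔ comm a (ann a) := by rw [← hpure, comm_sup_right]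
    _ ≤ comm a u ⊔ ⊥ := sup_le_sup_left (comm_ann_le_bot a) _
    _ = comm a u := sup_bot_eq _
    _ ≤ comm t u := comm_mono_left_s1 u (hle.trans inf_le_left)

end CommutatorLattice
end

section
/- If f : L → L' is a homomorphism of bounded distributive lattices (preserving 0 and 1) and I is a σ-ideal of L, then the ideal f•(I) of L' generated by f(I) is a σ-ideal of L'. -/
/-- An ideal of a bounded lattice, as a set: contains `⊥`, downward closed,
and closed under finite joins. -/
def LatticeIdeal {L : Type*} [Lattice L] [BoundedOrder L] (I : Set L) : Prop :=
  ⊥ ∈ I ∧ (∀ x ∈ I, ∀ y : L, y ≤ x → y ∈ I) ∧ ∀ x ∈ I, ∀ y ∈ I, x ⊔ y ∈ I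

/-- The ideal of a bounded lattice generated by a set. -/
def idealGen {L : Type*} [Lattice L] [BoundedOrder L] (S : Set L) : Set L :=
  ⋂₀ {J : Set L | LatticeIdeal J ∧ S ⊆ J}

/-- The annihilator `Ann(x) = {y | y ⊓ x = ⊥}`. -/
def latAnn {L : Type*} [Lattice L] [BoundedOrder L] (x : L) : Set L :=
  {y : L | y ⊓ x = ⊥}

/-- A σ-ideal: an ideal `I` such that `I ∨ Ann(x) = L` for every `x ∈ I`. -/
def IsSigmaIdeal {L : Type*} [Lattice L] [BoundedOrder L] (I : Set L) : Prop :=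
  LatticeIdeal I ∧ ∀ x ∈ I, idealGen (I ∪ latAnn x) = Set.univ

section Aux

variable {L : Type*} [Lattice L] [BoundedOrder L]

lemma latticeIdeal_idealGen (S : Set L) : LatticeIdeal (idealGen S) := by
  refine ⟨?_, ?_, ?_⟩
  · intro J hJ; exact hJ.1.1
  · intro x hx y hyx J hJ; exact hJ.1.2.1 x (hx J hJ) y hyx
  · intro x hx y hy J hJ; exact hJ.1.2.2 x (hx J hJ) y (hy J hJ)

lemma subset_idealGen (S : Set L) : S ⊆ idealGen S := by
  intro x hx J hJ; exact hJ.2 hx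

lemma idealGen_subset {S J : Set L} (hJ : LatticeIdeal J) (hSJ : S ⊆ J) :
    idealGen S ⊆ J := fun _ hx => hx J ⟨hJ, hSJ⟩

/-- Finite joins of elements of `S` (including the empty join `⊥`). -/
inductive FinJoin (S : Set L) : L → Prop
  | bot : FinJoin S ⊥
  | of {x : L} : x ∈ S → FinJoin S x
  | sup {x y : L} : FinJoin S x → FinJoin S y → FinJoin S (x ⊔ y)

lemma finJoin_mem {S J : Set L} (hJ : LatticeIdeal J) (hSJ : S ⊆ J) {s : L}
    (hs : FinJoin S s) : s ∈ J := by
  induction hs with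
  | bot => exact hJ.1
  | of h => exact hSJ h
  | sup _ _ ih1 ih2 => exact hJ.2.2 _ ih1 _ ih2

lemma mem_idealGen_iff {S : Set L} {z : L} :
    z ∈ idealGen S ↔ ∃ s, FinJoin S s ∧ z ≤ s := by
  constructor
  · intro hz
    have : LatticeIdeal {y : L | ∃ s, FinJoin S s ∧ y ≤ s} := by
      refine ⟨⟨⊥, FinJoin.bot, le_rfl⟩, ?_, ?_⟩
      · rintro x ⟨s, hs, hxs⟩ y hyx; exact ⟨s, hs, hyx.trans hxs⟩
      · rintro x ⟨s, hs, hxs⟩ y ⟨t, ht, hyt⟩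
        exact ⟨s ⊔ t, FinJoin.sup hs ht, sup_le_sup hxs hyt⟩
    exact idealGen_subset this (fun x hx => ⟨x, FinJoin.of hx, le_rfl⟩) hz
  · rintro ⟨s, hs, hzs⟩
    exact (latticeIdeal_idealGen S).2.1 s
      (finJoin_mem (latticeIdeal_idealGen S) (subset_idealGen S) hs) z hzs

lemma finJoin_union {A B : Set L} {s : L} (hs : FinJoin (A ∪ B) s) :
    ∃ a b, FinJoin A a ∧ FinJoin B b ∧ s ≤ a ⊔ b := by
  induction hs with
  | bot => exact ⟨⊥, ⊥, FinJoin.bot, FinJoin.bot, by simp⟩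
  | of h =>
    rcases h with h | h
    · exact ⟨_, ⊥, FinJoin.of h, FinJoin.bot, le_sup_left⟩
    · exact ⟨⊥, _, FinJoin.bot, FinJoin.of h, le_sup_right⟩
  | sup _ _ ih1 ih2 =>
    obtain ⟨a1, b1, ha1, hb1, h1⟩ := ih1
    obtain ⟨a2, b2, ha2, hb2, h2⟩ := ih2
    refine ⟨a1 ⊔ a2, b1 ⊔ b2, FinJoin.sup ha1 ha2, FinJoin.sup hb1 hb2, ?_⟩
    calc _ ≤ (a1 ⊔ b1) ⊔ (a2 ⊔ b2) := sup_le_sup h1 h2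
    _ ≤ _ := by
      apply sup_le <;> apply sup_le
      · exact le_sup_of_le_left le_sup_left
      · exact le_sup_of_le_right le_sup_left
      · exact le_sup_of_le_left le_sup_right
      · exact le_sup_of_le_right le_sup_right

end Aux

lemma latticeIdeal_latAnn {L : Type*} [DistribLattice L] [BoundedOrder L] (x : L) :
    LatticeIdeal (latAnn x) := by
  refine ⟨by simp [latAnn], ?_, ?_⟩
  · intro a ha y hya
    simp only [latAnn, Set.mem_setOf_eq] at *
    exact le_bot_iff.mp (ha ▸ inf_le_inf_right x hya)
  · intro a ha b hb
    simp only [latAnn, Set.mem_setOf_eq] at *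
    rw [inf_sup_right, ha, hb, sup_idem]

lemma finJoin_image {L L' : Type*} [DistribLattice L] [BoundedOrder L]
    [DistribLattice L'] [BoundedOrder L'] (f : BoundedLatticeHom L L')
    {I : Set L} (hI : LatticeIdeal I) {s : L'} (hs : FinJoin (f '' I) s) :
    ∃ x ∈ I, s ≤ f x := by
  induction hs with
  | bot => exact ⟨⊥, hI.1, bot_le⟩
  | of h => obtain ⟨x, hx, rfl⟩ := h; exact ⟨x, hx, le_rfl⟩
  | sup _ _ ih1 ih2 =>
    obtain ⟨x1, hx1, h1⟩ := ih1
    obtain ⟨x2, hx2, h2⟩ := ih2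
    refine ⟨x1 ⊔ x2, hI.2.2 _ hx1 _ hx2, ?_⟩
    rw [map_sup]; exact sup_le_sup h1 h2

theorem statement3 {L L' : Type*} [DistribLattice L] [BoundedOrder L]
    [DistribLattice L'] [BoundedOrder L'] (f : BoundedLatticeHom L L')
    (I : Set L) (hI : IsSigmaIdeal I) :
    IsSigmaIdeal (idealGen (f '' I)) := by
  set J := idealGen (f '' I) with hJdef
  refine ⟨latticeIdeal_idealGen _, ?_⟩
  intro z hz
  -- z ≤ f x for some x ∈ I
  obtain ⟨s, hs, hzs⟩ := mem_idealGen_iff.mp hz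
  obtain ⟨x, hxI, hsfx⟩ := finJoin_image f hI.1 hs
  have hzfx : z ≤ f x := hzs.trans hsfx
  -- get ⊤ from σ-ideal property of I
  have htop : (⊤ : L) ∈ idealGen (I ∪ latAnn x) := by
    rw [hI.2 x hxI]; trivial
  obtain ⟨t, ht, htt⟩ := mem_idealGen_iff.mp htop
  obtain ⟨a, b, ha, hb, htab⟩ := finJoin_union ht
  have haI : a ∈ I := finJoin_mem hI.1 le_rfl ha
  have hbAnn : b ∈ latAnn x := finJoin_mem (latticeIdeal_latAnn x) le_rfl hb
  -- f a ∈ J, f b ∈ latAnn z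
  have hfaJ : f a ∈ J := subset_idealGen _ ⟨a, haI, rfl⟩
  have hfbAnn : f b ∈ latAnn z := by
    have h1 : f b ⊓ z ≤ f b ⊓ f x := inf_le_inf_left _ hzfx
    have h2 : f b ⊓ f x = ⊥ := by rw [← map_inf, hbAnn, map_bot]
    exact le_bot_iff.mp (h2 ▸ h1)
  -- conclude
  apply Set.eq_univ_of_forall
  intro w
  have hK := latticeIdeal_idealGen (J ∪ latAnn z)
  have hmem : f a ⊔ f b ∈ idealGen (J ∪ latAnn z) :=
    hK.2.2 _ (subset_idealGen _ (Or.inl hfaJ)) _ (subset_idealGen _ (Or.inr hfbAnn))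
  have hab : (⊤ : L) ≤ a ⊔ b := htt.trans htab
  have htop' : (⊤ : L') ≤ f a ⊔ f b := by
    calc (⊤ : L') = f ⊤ := (map_top f).symm
    _ ≤ f (a ⊔ b) := OrderHomClass.mono f hab
    _ = f a ⊔ f b := map_sup f a b
  exact hK.2.1 _ hmem w (le_top.trans htop')
end

section
/- For every prime element p of C, the element s(p) := ⨆{a ∈ B(C) | a ≤ p} is a max-regular element of C. -/
open CompleteLattice

namespace CommutatorLattice

variable {C : Type*} [CompleteLattice C] [CommutatorLattice C]

theorem statement6 (p : C) (hp : IsPrime p) :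
    IsMaxRegular (sSup {a : C | IsComplEl a ∧ a ≤ p}) := by
  set S : Set C := {a : C | IsComplEl a ∧ a ≤ p} with hS
  have hle : sSup S ≤ p := sSup_le fun a ha => ha.2
  refine ⟨⟨S, fun a ha => ha.1, rfl⟩, ?_, ?_⟩
  · intro h
    exact hp.1 (top_le_iff.mp (h ▸ hle))
  · rintro u ⟨T, hT, rfl⟩ hu hsu
    refine le_antisymm (sSup_le fun a haT => ?_) hsu
    obtain ⟨b, hab, habi⟩ := hT a haT
    have hcomm : comm a b ≤ p := by
      calc comm a b ≤ a ⊓ b := comm_le_inf a b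
        _ = ⊥ := habi
        _ ≤ p := bot_le
    rcases hp.2 a b hcomm with h | h
    · exact le_sSup ⟨⟨b, hab, habi⟩, h⟩
    · exfalso
      apply hu
      have hbS : b ≤ sSup S :=
        le_sSup ⟨⟨a, by rwa [sup_comm], by rwa [inf_comm]⟩, h⟩
      have ha : a ≤ sSup T := le_sSup haT
      have : a ⊔ b ≤ sSup T := sup_le ha (hbS.trans hsu)
      rw [hab] at this
      exact top_le_iff.mp this

end CommutatorLattice
end

section
/- The following are equivalent: (1) C is mp; (2) p ⊔ q = ⊤ for all distinct minimal primes p,q of C; (3) for every minimal prime p of C, the set V(p) := {q ∈ Spec(C) | p ≤ q} is closed in the flat topology on Spec(C). -/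
open CompleteLattice

namespace CommutatorLattice

variable {C : Type*} [CompleteLattice C] [CommutatorLattice C]

/-! ### Auxiliary lemmas -/

private lemma comm_sup_left' (a b c : C) : comm (a ⊔ b) c = comm a c ⊔ comm b c := by
  rw [← sSup_pair, comm_sSup, iSup_pair]

private lemma isPrime_of_isMaximal {m : C} (h : IsMaximal m) : IsPrime m := by
  obtain ⟨hm, hmax⟩ := h
  refine ⟨hm, fun a b hab => ?_⟩
  by_contra hcon
  push_neg at hcon
  obtain ⟨ha, hb⟩ := hcon
  have hsup : ∀ x : C, ¬ x ≤ m → m ⊔ x = ⊤ := by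
    intro x hx
    by_contra hne
    exact hx (le_sup_right.trans (hmax _ hne le_sup_left).le)
  have htop : (⊤ : C) ≤ m := by
    calc (⊤ : C) = comm ⊤ ⊤ := (comm_top ⊤).symm
      _ = comm (m ⊔ a) (m ⊔ b) := by rw [hsup a ha, hsup b hb]
      _ = comm m (m ⊔ b) ⊔ comm a (m ⊔ b) := comm_sup_left' ..
      _ ≤ m := by
          refine sup_le ((comm_le_inf ..).trans inf_le_left) ?_
          rw [comm_comm, comm_sup_left']
          refine sup_le ((comm_le_inf ..).trans inf_le_left) ?_
          rw [comm_comm]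
          exact hab
  exact hm (top_le_iff.1 htop)

private lemma exists_isMaximal_le {t : C} (ht : t ≠ ⊤) :
    ∃ m : C, t ≤ m ∧ IsMaximal m := by
  have hchain : ∀ c ⊆ {x : C | x ≠ ⊤}, IsChain (· ≤ ·) c → ∀ y ∈ c,
      ∃ ub ∈ {x : C | x ≠ ⊤}, ∀ z ∈ c, z ≤ ub := by
    intro c hcs hc y hy
    refine ⟨sSup c, ?_, fun z hz => le_sSup hz⟩
    intro htop
    obtain ⟨x, hxc, hx⟩ := (isCompactElement_iff_le_of_directed_sSup_le C (⊤ : C)).1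
      top_isCompact c ⟨y, hy⟩ hc.directedOn htop.ge
    exact hcs hxc (top_le_iff.1 hx)
  obtain ⟨m, htm, hms, hmax⟩ := zorn_le_nonempty₀ {x : C | x ≠ ⊤} hchain t ht
  exact ⟨m, htm, hms, fun q hq hmq => le_antisymm (hmax hq hmq) hmq⟩

private lemma exists_isPrime_le {t : C} (ht : t ≠ ⊤) : ∃ p : C, IsPrime p ∧ t ≤ p := by
  obtain ⟨m, htm, hm⟩ := exists_isMaximal_le ht
  exact ⟨m, isPrime_of_isMaximal hm, htm⟩

private lemma isPrime_sInf {c : Set C} (hne : c.Nonempty)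
    (htot : ∀ x ∈ c, ∀ y ∈ c, x ≤ y ∨ y ≤ x) (hp : ∀ p ∈ c, IsPrime p) :
    IsPrime (sInf c) := by
  obtain ⟨y, hy⟩ := hne
  refine ⟨fun h => (hp y hy).1 (top_le_iff.1 (h ▸ sInf_le hy)), fun a b hab => ?_⟩
  by_cases ha : a ≤ sInf c
  · exact Or.inl ha
  · obtain ⟨p0, hp0c, hap0⟩ : ∃ p0 ∈ c, ¬ a ≤ p0 := by
      by_contra h
      push_neg at h
      exact ha (le_sInf h)
    have hbp0 : b ≤ p0 :=
      ((hp p0 hp0c).2 a b (hab.trans (sInf_le hp0c))).resolve_left hap0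
    refine Or.inr (le_sInf fun p hpc => ?_)
    rcases htot p hpc p0 hp0c with h | h
    · exact ((hp p hpc).2 a b (hab.trans (sInf_le hpc))).resolve_left
        (fun h' => hap0 (h'.trans h))
    · exact hbp0.trans h

private lemma exists_isMinPrime_le {r : C} (hr : IsPrime r) :
    ∃ m : C, IsMinPrime m ∧ m ≤ r := by
  have hchain : ∀ c ⊆ {p : Cᵒᵈ | IsPrime (OrderDual.ofDual p) ∧ OrderDual.ofDual p ≤ r},
      IsChain (· ≤ ·) c → ∀ y ∈ c,
      ∃ ub ∈ {p : Cᵒᵈ | IsPrime (OrderDual.ofDual p) ∧ OrderDual.ofDual p ≤ r},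
        ∀ z ∈ c, z ≤ ub := by
    intro c hcs hc y hy
    have hprime : IsPrime (sInf (OrderDual.ofDual '' c) : C) := by
      refine isPrime_sInf ⟨OrderDual.ofDual y, ⟨y, hy, rfl⟩⟩ ?_ ?_
      · rintro _ ⟨x, hx, rfl⟩ _ ⟨z, hz, rfl⟩
        by_cases hxz : x = z
        · exact Or.inl (hxz ▸ le_rfl)
        · exact (hc hx hz hxz).symm
      · rintro _ ⟨x, hx, rfl⟩
        exact (hcs hx).1
    refine ⟨OrderDual.toDual (sInf (OrderDual.ofDual '' c)), ⟨hprime, ?_⟩, ?_⟩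
    · exact le_trans (sInf_le (Set.mem_image_of_mem _ hy)) (hcs hy).2
    · intro z hz
      show sInf (OrderDual.ofDual '' c) ≤ OrderDual.ofDual z
      exact sInf_le (Set.mem_image_of_mem _ hz)
  obtain ⟨m, hrm, hms, hmax⟩ := zorn_le_nonempty₀ (α := Cᵒᵈ)
    {p : Cᵒᵈ | IsPrime (OrderDual.ofDual p) ∧ OrderDual.ofDual p ≤ r}
    hchain (OrderDual.toDual r) ⟨hr, le_rfl⟩
  refine ⟨OrderDual.ofDual m, ⟨hms.1, fun q hq hqm => ?_⟩, hms.2⟩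
  exact le_antisymm hqm (hmax (y := OrderDual.toDual q) ⟨hq, hqm.trans hms.2⟩ hqm)

private lemma flat_open_nbhd {U : Set (Spec C)}
    (hU : TopologicalSpace.GenerateOpen
      {U : Set (Spec C) | ∃ a : C, IsCompactElement a ∧ U = {p : Spec C | a ≤ p.1}} U) :
    ∀ q : Spec C, q ∈ U →
      ∃ a : C, IsCompactElement a ∧ a ≤ q.1 ∧ {p : Spec C | a ≤ p.1} ⊆ U := by
  induction hU with
  | basic V hV =>
      rintro q hq
      obtain ⟨a, ha, rfl⟩ := hV
      exact ⟨a, ha, hq, le_refl _⟩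
  | univ =>
      intro q _
      exact ⟨⊥, (isCompactElement_iff_exists_le_sSup_of_le_sSup (k := (⊥ : C))).2 fun s _ => ⟨∅, by simp⟩, bot_le, fun _ _ => trivial⟩
  | inter V W hV hW ihV ihW =>
      intro q hq
      obtain ⟨a, ha, haq, haV⟩ := ihV q hq.1
      obtain ⟨b, hb, hbq, hbW⟩ := ihW q hq.2
      classical
      have hab : IsCompactElement (a ⊔ b) := by
        have h := isCompactElement_finsetSup (f := (id : C → C)) {a, b} ?_
        · simpa using h
        · intro x hx
          rcases Finset.mem_insert.1 hx with rfl | hx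
          · exact ha
          · rw [Finset.mem_singleton.1 hx]; exact hb
      exact ⟨a ⊔ b, hab, sup_le haq hbq, fun p hp =>
        ⟨haV (le_sup_left.trans hp), hbW (le_sup_right.trans hp)⟩⟩
  | sUnion S hS ih =>
      rintro q ⟨V, hVS, hqV⟩
      obtain ⟨a, ha, haq, haV⟩ := ih V hVS q hqV
      exact ⟨a, ha, haq, fun p hp => ⟨V, hVS, haV hp⟩⟩

private lemma exists_compact_sup_top {p m : C} (h : p ⊔ m = ⊤) :
    ∃ a b : C, IsCompactElement b ∧ a ≤ p ∧ b ≤ m ∧ (⊤ : C) ≤ a ⊔ b := by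
  classical
  obtain ⟨sp, hsp, hspsup⟩ := compactlyGenerated (C := C) p
  obtain ⟨sm, hsm, hsmsup⟩ := compactlyGenerated (C := C) m
  have htop : (⊤ : C) ≤ sSup (sp ∪ sm) := by
    rw [sSup_union, hspsup, hsmsup, h]
  obtain ⟨t, hts, htle⟩ := (isCompactElement_iff_exists_le_sSup_of_le_sSup (k := (⊤ : C))).1 top_isCompact _ htop
  refine ⟨(t.filter (· ∈ sp)).sup id, (t.filter (· ∉ sp)).sup id, ?_, ?_, ?_, ?_⟩
  · refine isCompactElement_finsetSup _ (fun x hx => ?_)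
    obtain ⟨hxt, hxsp⟩ := Finset.mem_filter.1 hx
    rcases hts hxt with hx' | hx'
    · exact absurd hx' hxsp
    · exact hsm x hx'
  · refine Finset.sup_le fun x hx => ?_
    exact hspsup ▸ le_sSup (Finset.mem_filter.1 hx).2
  · refine Finset.sup_le fun x hx => ?_
    obtain ⟨hxt, hxsp⟩ := Finset.mem_filter.1 hx
    rcases hts hxt with hx' | hx'
    · exact absurd hx' hxsp
    · exact hsmsup ▸ le_sSup hx'
  · refine htle.trans (Finset.sup_le fun x hx => ?_)
    by_cases hxp : x ∈ sp
    · exact (Finset.le_sup (f := (id : C → C)) (Finset.mem_filter.2 ⟨hx, hxp⟩)).trans le_sup_left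
    · exact (Finset.le_sup (f := (id : C → C)) (Finset.mem_filter.2 ⟨hx, hxp⟩)).trans le_sup_right

theorem statement11 :
    (MP C ↔ ∀ p q : C, IsMinPrime p → IsMinPrime q → p ≠ q → p ⊔ q = ⊤) ∧
    (MP C ↔ ∀ p : C, IsMinPrime p →
      @IsClosed (Spec C) (flatTop C) {q : Spec C | p ≤ q.1}) := by
  have h12 : MP C ↔ (∀ p q : C, IsMinPrime p → IsMinPrime q → p ≠ q → p ⊔ q = ⊤) := by
    constructor
    · intro hmp p q hp hq hpq
      by_contra hne
      obtain ⟨r, hr, hler⟩ := exists_isPrime_le hne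
      obtain ⟨u, hu, huniq⟩ := hmp r hr
      exact hpq ((huniq p ⟨hp, le_sup_left.trans hler⟩).trans
        (huniq q ⟨hq, le_sup_right.trans hler⟩).symm)
    · intro h p hp
      obtain ⟨m, hm, hmp⟩ := exists_isMinPrime_le hp
      refine ⟨m, ⟨hm, hmp⟩, ?_⟩
      rintro q ⟨hq, hqp⟩
      by_contra hne
      have htop : (⊤ : C) ≤ p := by
        rw [← h q m hq hm hne]
        exact sup_le hqp hmp
      exact hp.1 (top_le_iff.1 htop)
  have h23 : (∀ p q : C, IsMinPrime p → IsMinPrime q → p ≠ q → p ⊔ q = ⊤) ↔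
      (∀ p : C, IsMinPrime p →
        @IsClosed (Spec C) (flatTop C) {q : Spec C | p ≤ q.1}) := by
    constructor
    · intro h p hp
      have hcompl : {q : Spec C | p ≤ q.1}ᶜ = ⋃₀ {U | (∃ a : C, IsCompactElement a ∧
          U = {q : Spec C | a ≤ q.1}) ∧ U ⊆ {q : Spec C | p ≤ q.1}ᶜ} := by
        ext q
        constructor
        · intro hq
          obtain ⟨m, hm, hmq⟩ := exists_isMinPrime_le q.2
          have hpm : p ≠ m := by
            rintro rfl
            exact hq hmq
          obtain ⟨a, b, hbc, hap, hbm, htop⟩ :=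
            exists_compact_sup_top (h p m hp hm hpm)
          refine ⟨{r : Spec C | b ≤ r.1}, ⟨⟨b, hbc, rfl⟩, ?_⟩, hbm.trans hmq⟩
          intro r hbr hpr
          exact r.2.1 (top_le_iff.1 (htop.trans (sup_le (hap.trans hpr) hbr)))
        · rintro ⟨U, ⟨_, hUsub⟩, hqU⟩
          exact hUsub hqU
      refine @IsClosed.mk (Spec C) (flatTop C) _ ?_
      show TopologicalSpace.GenerateOpen _ _
      rw [hcompl]
      exact TopologicalSpace.GenerateOpen.sUnion _
        (fun U hU => TopologicalSpace.GenerateOpen.basic U hU.1)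
    · intro h p q hp hq hpq
      have hclosed := h p hp
      have hqmem : (⟨q, hq.1⟩ : Spec C) ∈ {r : Spec C | p ≤ r.1}ᶜ := by
        intro hpq'
        exact hpq (hq.2 p hp.1 hpq')
      have hopen : TopologicalSpace.GenerateOpen
          {U : Set (Spec C) | ∃ a : C, IsCompactElement a ∧ U = {p : Spec C | a ≤ p.1}}
          {r : Spec C | p ≤ r.1}ᶜ := hclosed.isOpen_compl
      obtain ⟨a, _, haq, haV⟩ := flat_open_nbhd hopen ⟨q, hq.1⟩ hqmem
      have hap : a ⊔ p = ⊤ := by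
        by_contra hne
        obtain ⟨r, hr, hler⟩ := exists_isPrime_le hne
        have hmem : (⟨r, hr⟩ : Spec C) ∈ {p : Spec C | a ≤ p.1} :=
          le_sup_left.trans hler
        exact haV hmem (le_sup_right.trans hler)
      rw [← top_le_iff, ← hap]
      exact sup_le (haq.trans le_sup_right) le_sup_left
  exact ⟨h12, h12.trans h23⟩

end CommutatorLattice
end
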